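/- Let f be convex and differentiable with minimizer x*, let g(x) = f(x) + (μ/2)‖x − x₀‖² with minimizer x̃*. Then for any point x_a, ‖∇f(x_a)‖² ≤ 6‖∇g(x_a)‖² + 12 μ² ‖x₀ − x*‖². -/

import Mathlib

open RealInnerProductSpace

-- first-order condition for convex differentiable functions
lemma convex_first_order {E : Type*} [NormedAddCommGroup E] [InnerProductSpace ℝ E] [CompleteSpace E]
    {f : E → ℝ} (hcvx : ConvexOn ℝ Set.univ f) {x v : E}
    (h : HasGradientAt f v x) (y : E) : ⟪v, y - x⟫ ≤ f y - f x := by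
  set z := y - x with hz
  have hline : HasDerivAt (fun t : ℝ => x + t • z) z 0 := by
    simpa using ((hasDerivAt_id (0:ℝ)).smul_const z).const_add x
  have hφ : HasDerivAt (fun t : ℝ => f (x + t • z)) ⟪v, z⟫ 0 := by
    have h2 : HasFDerivAt f ((InnerProductSpace.toDual ℝ E) v) (x + (0:ℝ) • z) := by
      simpa using h.hasFDerivAt
    have := h2.comp_hasDerivAt 0 hline
    simp only [Function.comp_def] at this
    simpa using this
  have hsl := hasDerivAt_iff_tendsto_slope.mp hφ
  have hsl' : Filter.Tendsto (slope (fun t : ℝ => f (x + t • z)) 0) (nhdsWithin 0 (Set.Ioi 0))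
      (nhds ⟪v, z⟫) := hsl.mono_left (nhdsWithin_mono _ (fun t ht => ne_of_gt ht))
  refine le_of_tendsto hsl' ?_
  filter_upwards [Ioc_mem_nhdsGT_of_mem (by norm_num : (0:ℝ) ∈ Set.Ico 0 1)] with t ht
  obtain ⟨ht0, ht1⟩ := ht
  have hcomb : f (x + t • z) ≤ (1 - t) * f x + t * f y := by
    have h1 : x + t • z = (1 - t) • x + t • y := by
      rw [hz]; module
    rw [h1]
    exact hcvx.2 (Set.mem_univ x) (Set.mem_univ y) (by linarith) (le_of_lt ht0) (by ring)
  have : slope (fun t : ℝ => f (x + t • z)) 0 t = (f (x + t • z) - f x) / t := by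
    simp [slope_def_field]
  rw [this]
  rw [div_le_iff₀ ht0]
  simp at hcomb ⊢
  nlinarith [hcomb]

set_option maxHeartbeats 1000000 in
theorem stmt_6 {d : ℕ} (f : EuclideanSpace ℝ (Fin d) → ℝ)
    (f' g' : EuclideanSpace ℝ (Fin d) → EuclideanSpace ℝ (Fin d))
    (hcvx : ConvexOn ℝ Set.univ f)
    (hgrad : ∀ x, HasGradientAt f (f' x) x)
    (xstar : EuclideanSpace ℝ (Fin d)) (hmin : ∀ x, f xstar ≤ f x)
    (μ : ℝ) (hμ : 0 < μ) (x₀ : EuclideanSpace ℝ (Fin d))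
    (hg' : ∀ x, HasGradientAt (fun y => f y + μ / 2 * ‖y - x₀‖ ^ 2) (g' x) x)
    (xtstar : EuclideanSpace ℝ (Fin d))
    (hgmin : ∀ x, f xtstar + μ / 2 * ‖xtstar - x₀‖ ^ 2 ≤ f x + μ / 2 * ‖x - x₀‖ ^ 2)
    (xa : EuclideanSpace ℝ (Fin d)) :
    ‖f' xa‖ ^ 2 ≤ 6 * ‖g' xa‖ ^ 2 + 12 * μ ^ 2 * ‖x₀ - xstar‖ ^ 2 := by
  -- step 1: g' x = f' x + μ • (x - x₀)
  have hgform : ∀ x, g' x = f' x + μ • (x - x₀) := by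
    intro x
    have hsub : HasFDerivAt (fun y : EuclideanSpace ℝ (Fin d) => y - x₀)
        (ContinuousLinearMap.id ℝ _) x := (hasFDerivAt_id x).sub_const x₀
    have hq : HasFDerivAt (fun y : EuclideanSpace ℝ (Fin d) => μ / 2 * ‖y - x₀‖ ^ 2)
        ((InnerProductSpace.toDual ℝ _) (μ • (x - x₀))) x := by
      have := hsub.norm_sq.const_mul (μ / 2)
      refine this.congr_fderiv ?_
      ext w
      simp [inner_smul_left, real_inner_smul_left]
      ring
    have hgx : HasGradientAt (fun y => f y + μ / 2 * ‖y - x₀‖ ^ 2)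
        (f' x + μ • (x - x₀)) x := by
      have := (hgrad x).hasFDerivAt.add hq
      have h2 : HasFDerivAt (fun y => f y + μ / 2 * ‖y - x₀‖ ^ 2)
          ((InnerProductSpace.toDual ℝ _) (f' x + μ • (x - x₀))) x := by
        refine this.congr_fderiv ?_; simp
      have := h2.hasGradientAt
      simpa using this
    exact (hg' x).unique hgx
  -- step 2: g' xtstar = 0
  have hg0 : g' xtstar = 0 := by
    have hloc : IsLocalMin (fun y => f y + μ / 2 * ‖y - x₀‖ ^ 2) xtstar :=
      Filter.Eventually.of_forall hgmin
    have := hloc.hasFDerivAt_eq_zero (hg' xtstar).hasFDerivAt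
    have h2 := (InnerProductSpace.toDual ℝ (EuclideanSpace ℝ (Fin d))).injective
      (by simpa using this : (InnerProductSpace.toDual ℝ _) (g' xtstar)
        = (InnerProductSpace.toDual ℝ _) 0)
    simpa using h2
  -- monotonicity of f'
  have hmono : (0:ℝ) ≤ ⟪f' xa - f' xtstar, xa - xtstar⟫ := by
    have h1 := convex_first_order hcvx (hgrad xa) xtstar
    have h2 := convex_first_order hcvx (hgrad xtstar) xa
    have : ⟪f' xa - f' xtstar, xa - xtstar⟫
        = -⟪f' xa, xtstar - xa⟫ - ⟪f' xtstar, xa - xtstar⟫ := by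
      rw [inner_sub_left]
      rw [show xtstar - xa = -(xa - xtstar) by abel, inner_neg_right]
      ring
    rw [this]
    linarith
  -- strong monotonicity of g'
  set r := ‖xa - xtstar‖ with hr
  have hfz : f' xtstar = -(μ • (xtstar - x₀)) := by
    have hz := hgform xtstar
    rw [hg0] at hz
    have := hz.symm
    rw [add_eq_zero_iff_eq_neg] at this
    exact this
  have hinner : ⟪g' xa, xa - xtstar⟫
      = ⟪f' xa - f' xtstar, xa - xtstar⟫ + μ * r ^ 2 := by
    rw [hgform xa, hfz]
    rw [inner_add_left, inner_sub_left, inner_neg_left, real_inner_smul_left,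
      real_inner_smul_left]
    have key : ⟪xa - x₀, xa - xtstar⟫ - ⟪xtstar - x₀, xa - xtstar⟫ = r ^ 2 := by
      rw [← inner_sub_left, show xa - x₀ - (xtstar - x₀) = xa - xtstar by abel,
        real_inner_self_eq_norm_sq]
    nlinarith [key]
  have hstrong : μ * r ≤ ‖g' xa‖ := by
    have hcs := real_inner_le_norm (g' xa) (xa - xtstar)
    have hineq : μ * r ^ 2 ≤ ‖g' xa‖ * r := by
      rw [← hr] at hcs; nlinarith
    rcases eq_or_lt_of_le (norm_nonneg (xa - xtstar)) with h0 | h0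
    · rw [← hr] at h0
      nlinarith [norm_nonneg (g' xa)]
    · rw [← hr] at h0
      have := (mul_le_mul_iff_of_pos_right h0).mp (by nlinarith : (μ * r) * r ≤ ‖g' xa‖ * r)
      exact this
  -- ‖xtstar - x₀‖ ≤ ‖x₀ - xstar‖
  have hdist : ‖xtstar - x₀‖ ≤ ‖x₀ - xstar‖ := by
    have h1 := hgmin xstar
    have h2 := hmin xtstar
    have hsq : ‖xtstar - x₀‖ ^ 2 ≤ ‖xstar - x₀‖ ^ 2 := by nlinarith
    have : ‖xstar - x₀‖ = ‖x₀ - xstar‖ := norm_sub_rev _ _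
    nlinarith [norm_nonneg (xtstar - x₀), norm_nonneg (xstar - x₀)]
  -- final combination
  have hfnorm : ‖f' xa‖ ≤ 2 * ‖g' xa‖ + μ * ‖x₀ - xstar‖ := by
    have hfa : f' xa = g' xa - μ • (xa - x₀) := by rw [hgform xa]; abel
    have h1 : ‖f' xa‖ ≤ ‖g' xa‖ + μ * ‖xa - x₀‖ := by
      rw [hfa]
      calc ‖g' xa - μ • (xa - x₀)‖ ≤ ‖g' xa‖ + ‖μ • (xa - x₀)‖ := norm_sub_le _ _
        _ = ‖g' xa‖ + μ * ‖xa - x₀‖ := by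
            rw [norm_smul, Real.norm_eq_abs, abs_of_pos hμ]
    have h2 : ‖xa - x₀‖ ≤ r + ‖xtstar - x₀‖ := by
      rw [hr]
      calc ‖xa - x₀‖ = ‖(xa - xtstar) + (xtstar - x₀)‖ := by rw [show (xa - xtstar) + (xtstar - x₀) = xa - x₀ by abel]
        _ ≤ ‖xa - xtstar‖ + ‖xtstar - x₀‖ := norm_add_le _ _
    nlinarith
  nlinarith [norm_nonneg (f' xa), norm_nonneg (g' xa), norm_nonneg (x₀ - xstar),
    sq_nonneg (‖g' xa‖ - μ * ‖x₀ - xstar‖), sq_nonneg ‖f' xa‖]
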